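/- Let W = (w_{ij}) ∈ ℝ^{n×n} be a real symmetric positive definite matrix and let S ⊆ {1,…,n} with |S| ≥ 2. If the sum of the off-diagonal entries over unordered pairs of distinct elements of S is nonnegative, i.e., Σ_{{i,j}⊆S, i≠j} w_{ij} ≥ 0, then w̃(S) ≤ (|S|−1) · χ_S^T W χ_S, where w̃(S) = Σ_{{i,j}⊆S, i≠j} (w_{ij} + w_{ii} + w_{jj}). -/

import Mathlib

open Matrix Finset

/-- χ_S^T W χ_S = Σ_{i∈S} Σ_{j∈S} w_{ij}. -/
noncomputable def quadForm {n : ℕ} (W : Matrix (Fin n) (Fin n) ℝ) (S : Finset (Fin n)) : ℝ :=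
  ∑ i ∈ S, ∑ j ∈ S, W i j

/-- Sum of `f i j` over unordered pairs {i,j} ⊆ S with i ≠ j (for symmetric `f`). -/
noncomputable def pairSum {n : ℕ} (f : Fin n → Fin n → ℝ) (S : Finset (Fin n)) : ℝ :=
  (∑ p ∈ S.offDiag, f p.1 p.2) / 2

/-- w̃(S) = Σ_{{i,j}⊆S, i≠j} (w_{ij} + w_{ii} + w_{jj}). -/
noncomputable def modWeight {n : ℕ} (W : Matrix (Fin n) (Fin n) ℝ) (S : Finset (Fin n)) : ℝ :=
  pairSum (fun i j => W i j + W i i + W j j) S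

lemma diag_eq_image' {α : Type*} [DecidableEq α] (s : Finset α) :
    s.diag = s.image fun a => (a, a) := by
  ext ⟨a₁, a₂⟩
  simp only [Finset.mem_diag, Finset.mem_image]
  constructor
  · rintro ⟨h, rfl⟩; exact ⟨a₁, h, rfl⟩
  · rintro ⟨a, h, h2⟩; obtain ⟨rfl, rfl⟩ := Prod.mk.inj h2; exact ⟨h, rfl⟩

lemma offDiag_sum' {α : Type*} [DecidableEq α] (s : Finset α) (g : α × α → ℝ) :
    ∑ p ∈ s.offDiag, g p = (∑ p ∈ s ×ˢ s, g p) - ∑ i ∈ s, g (i, i) := by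
  have h := Finset.sum_union (f := g) (Finset.disjoint_diag_offDiag s)
  rw [Finset.diag_union_offDiag] at h
  have hdiag : ∑ p ∈ s.diag, g p = ∑ i ∈ s, g (i, i) := by
    rw [diag_eq_image', Finset.sum_image (fun x1 _ x2 _ h3 => (Prod.mk.inj h3).1)]
  rw [h, hdiag]; ring

theorem stmt14 {n : ℕ} (W : Matrix (Fin n) (Fin n) ℝ) (hW : W.PosDef)
    (S : Finset (Fin n)) (hS : 2 ≤ S.card)
    (hoff : 0 ≤ pairSum (fun i j => W i j) S) :
    modWeight W S ≤ ((S.card : ℝ) - 1) * quadForm W S := by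
  set c : ℝ := (S.card : ℝ)
  set D : ℝ := ∑ i ∈ S, W i i with hD
  set P : ℝ := pairSum (fun i j => W i j) S with hP
  have hsum1 : ∑ p ∈ S.offDiag, W p.1 p.1 = (c - 1) * D := by
    rw [offDiag_sum' S (fun p => W p.1 p.1), Finset.sum_product]
    simp only [Finset.sum_const, nsmul_eq_mul, ← Finset.mul_sum]
    rw [← hD]; ring
  have hsum2 : ∑ p ∈ S.offDiag, W p.2 p.2 = (c - 1) * D := by
    rw [offDiag_sum' S (fun p => W p.2 p.2), Finset.sum_product, Finset.sum_comm]
    simp only [Finset.sum_const, nsmul_eq_mul, ← Finset.mul_sum]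
    rw [← hD]; ring
  have hmod : modWeight W S = P + (c - 1) * D := by
    unfold modWeight pairSum
    simp only [Finset.sum_add_distrib, hsum1, hsum2]
    rw [hP]; unfold pairSum; ring
  have hquad : quadForm W S = D + 2 * P := by
    unfold quadForm
    rw [show ∑ i ∈ S, ∑ j ∈ S, W i j = ∑ p ∈ S ×ˢ S, W p.1 p.2 from (Finset.sum_product' S S (fun i j => W i j)).symm]
    rw [hP]; unfold pairSum
    have := offDiag_sum' S (fun p => W p.1 p.2)
    rw [this, hD]
    ring
  rw [hmod, hquad]
  have hc : (2 : ℝ) ≤ c := by unfold c; exact_mod_cast hS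
  nlinarith [hoff]
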